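/- The Bayes factor for marginal independence is consistent in selection: (a) if r_n → r as n → ∞ for some r with 0 < |r| < 1 (as happens under the alternative H₁ by Assumption 1, since the sample correlation is asymptotically unbiased), then BF^M_n → ∞; (b) if the sequence n·r_n² is bounded (as happens under the null H₀), then BF^M_n → 0. (Lemma 3, marginal case.) -/

import Mathlib

open Filter Real

/-- The bivariate gamma function Γ₂(x) = π^{1/2} Γ(x) Γ(x − 1/2). -/
noncomputable def Gamma2 (x : ℝ) : ℝ :=
  Real.sqrt π * Real.Gamma x * Real.Gamma (x - 1 / 2)

/-- The Bayes factor of Lemma 2 in favour of marginal dependence, with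
standardized data (D = I_p, f_ii = f_jj = δ−p−1, r_f = 0, s_ii = s_jj = n)
and sample correlation r_n, so that r_{t,n} = n r_n/(δ−p−1+n). -/
noncomputable def BFmarg (p : ℕ) (δ : ℝ) (r : ℕ → ℝ) (n : ℕ) : ℝ :=
  (Gamma2 ((δ + n - p + 2) / 2) * Real.Gamma ((δ - p + 3) / 2) ^ 2 /
      (Gamma2 ((δ - p + 2) / 2) * Real.Gamma ((δ + n - p + 3) / 2) ^ 2)) *
    (1 - ((n : ℝ) * r n / (δ - p - 1 + n)) ^ 2) ^ (-(δ + n - p + 2) / 2) *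
    ((δ + n - p - 1) / (δ - p - 1))

lemma gauss_half {x : ℝ} (hx : 0 < x) :
    Real.Gamma (x + 1 / 2) ≤ Real.sqrt x * Real.Gamma x := by
  have hx1 : (0 : ℝ) < x + 1 := by linarith
  have h := Real.convexOn_log_Gamma.2 (Set.mem_Ioi.2 hx) (Set.mem_Ioi.2 hx1)
    (by norm_num : (0:ℝ) ≤ 1/2) (by norm_num : (0:ℝ) ≤ 1/2) (by norm_num)
  have hGx : 0 < Real.Gamma x := Real.Gamma_pos_of_pos hx
  have hmid : (1/2 : ℝ) • x + (1/2 : ℝ) • (x + 1) = x + 1/2 := by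
    simp [smul_eq_mul]; ring
  rw [hmid] at h
  simp only [Function.comp_apply, smul_eq_mul] at h
  rw [Real.Gamma_add_one hx.ne', Real.log_mul hx.ne' hGx.ne'] at h
  have hlog : Real.log (Real.Gamma (x + 1/2)) ≤ Real.log (Real.sqrt x * Real.Gamma x) := by
    rw [Real.log_mul (Real.sqrt_pos.2 hx).ne' hGx.ne', Real.log_sqrt hx.le]
    linarith
  have hG2 : 0 < Real.Gamma (x + 1/2) := Real.Gamma_pos_of_pos (by linarith)
  exact (Real.log_le_log_iff hG2 (by positivity)).1 hlog

lemma sqrt_le_self' {x : ℝ} (hx : 1 ≤ x) : Real.sqrt x ≤ x := by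
  have h1 : Real.sqrt x ^ 2 = x := Real.sq_sqrt (by linarith)
  have h2 : 0 ≤ Real.sqrt x := Real.sqrt_nonneg x
  nlinarith

lemma Q_upper {x : ℝ} (hx : 0 < x) :
    Real.Gamma (x + 1/2) * Real.Gamma x / Real.Gamma (x + 1) ^ 2
      ≤ Real.sqrt x / x ^ 2 := by
  have hGx : 0 < Real.Gamma x := Real.Gamma_pos_of_pos hx
  have h := gauss_half hx
  rw [Real.Gamma_add_one hx.ne']
  rw [div_le_div_iff₀ (by positivity) (by positivity)]
  have hs : 0 < Real.sqrt x := Real.sqrt_pos.2 hx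
  nlinarith [sq_nonneg x, mul_pos hGx hGx, mul_pos hx hx]

lemma Q_lower {x : ℝ} (hx : 1 ≤ x) :
    ((x + 1/2) ^ 2)⁻¹
      ≤ Real.Gamma (x + 1/2) * Real.Gamma x / Real.Gamma (x + 1) ^ 2 := by
  have hx0 : (0:ℝ) < x := by linarith
  have hGx : 0 < Real.Gamma x := Real.Gamma_pos_of_pos hx0
  have hG2 : 0 < Real.Gamma (x + 1/2) := Real.Gamma_pos_of_pos (by linarith)
  have hG1 : 0 < Real.Gamma (x + 1) := Real.Gamma_pos_of_pos (by linarith)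
  have hy : (0:ℝ) < x + 1/2 := by linarith
  have hs : 0 < Real.sqrt (x + 1/2) := Real.sqrt_pos.2 hy
  have h1 : Real.Gamma (x + 1) ≤ Real.sqrt (x + 1/2) * Real.Gamma (x + 1/2) := by
    have := gauss_half hy
    have e : x + 1/2 + 1/2 = x + 1 := by ring
    rwa [e] at this
  have h2 : Real.Gamma (x + 1) ≤ (x + 1/2) * Real.Gamma x := by
    rw [Real.Gamma_add_one hx0.ne']; nlinarith
  have hsy : Real.sqrt (x + 1/2) ≤ x + 1/2 := sqrt_le_self' (by linarith)
  rw [inv_eq_one_div, div_le_div_iff₀ (by positivity) (by positivity)]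
  calc 1 * Real.Gamma (x+1) ^ 2 = Real.Gamma (x+1) * Real.Gamma (x+1) := by ring
    _ ≤ (Real.sqrt (x + 1/2) * Real.Gamma (x + 1/2)) * ((x + 1/2) * Real.Gamma x) :=
        mul_le_mul h1 h2 hG1.le (by positivity)
    _ = Real.Gamma (x + 1/2) * Real.Gamma x * (Real.sqrt (x+1/2) * (x+1/2)) := by ring
    _ ≤ Real.Gamma (x + 1/2) * Real.Gamma x * ((x+1/2) * (x+1/2)) := by
        gcongr
    _ = Real.Gamma (x + 1/2) * Real.Gamma x * (x+1/2)^2 := by ring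

set_option maxHeartbeats 1000000 in
/-- Lemma 3, marginal case: consistency in selection of the Bayes factor for
marginal independence. (a) Under the alternative (r_n → r with 0 < |r| < 1),
BF^M_n → ∞; (b) under the null (n·r_n² bounded), BF^M_n → 0. -/
theorem bayes_factor_marginal_consistent
    (p : ℕ) (hp : 0 < p) (δ : ℝ) (hδ : (p : ℝ) + 1 < δ)
    (r : ℕ → ℝ) (hr : ∀ n, r n ∈ Set.Ioo (-1 : ℝ) 1) :
    (∀ r₀ : ℝ, Tendsto r atTop (nhds r₀) → 0 < |r₀| → |r₀| < 1 →
        Tendsto (BFmarg p δ r) atTop atTop) ∧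
    ((∃ K : ℝ, ∀ n : ℕ, (n : ℝ) * r n ^ 2 ≤ K) →
        Tendsto (BFmarg p δ r) atTop (nhds 0)) := by
  have hd : (0:ℝ) < δ - p - 1 := by linarith
  -- basic notation
  set t : ℕ → ℝ := fun n => (n : ℝ) * r n / (δ - p - 1 + n) with ht_def
  set x : ℕ → ℝ := fun n => (δ + n - p + 1) / 2 with hx_def
  set K : ℝ := Real.sqrt π * Real.Gamma ((δ - ↑p + 3) / 2) ^ 2 / Gamma2 ((δ - ↑p + 2) / 2)
    with hK_def
  have hG2pos : 0 < Gamma2 ((δ - ↑p + 2) / 2) := by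
    rw [Gamma2]
    have h1 : 0 < Real.Gamma ((δ - ↑p + 2) / 2) := Real.Gamma_pos_of_pos (by linarith)
    have h2 : 0 < Real.Gamma ((δ - ↑p + 2) / 2 - 1/2) := Real.Gamma_pos_of_pos (by linarith)
    positivity
  have hKpos : 0 < K := by
    rw [hK_def]
    have h1 : 0 < Real.Gamma ((δ - ↑p + 3) / 2) := Real.Gamma_pos_of_pos (by linarith)
    positivity
  have hxn : ∀ n : ℕ, 1 ≤ x n := by
    intro n
    have : (0:ℝ) ≤ n := Nat.cast_nonneg n
    rw [hx_def]; dsimp only; linarith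
  have ht2 : ∀ n : ℕ, t n ^ 2 < 1 := by
    intro n
    have hn : (0:ℝ) ≤ n := Nat.cast_nonneg n
    obtain ⟨h1, h2⟩ := hr n
    have hr2 : r n ^ 2 ≤ 1 := by nlinarith
    rw [ht_def]; dsimp only
    rw [div_pow, div_lt_one (by positivity), mul_pow]
    nlinarith [mul_nonneg (mul_nonneg hn hn) (sub_nonneg.2 hr2), mul_pos hd hd,
      mul_nonneg hd.le hn]
  have htpos : ∀ n : ℕ, 0 < 1 - t n ^ 2 := fun n => by linarith [ht2 n]
  -- the rewriting of the Bayes factor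
  have hBF : ∀ n : ℕ, BFmarg p δ r n =
      K * (Real.Gamma (x n + 1/2) * Real.Gamma (x n) / Real.Gamma (x n + 1) ^ 2) *
        ((1 - t n ^ 2) ^ (-(δ + n - p + 2) / 2)) * ((δ + n - p - 1) / (δ - p - 1)) := by
    intro n
    have e1 : x n + 1/2 = (δ + ↑n - ↑p + 2) / 2 := by rw [hx_def]; ring
    have e2 : (δ + ↑n - ↑p + 2) / 2 - 1/2 = x n := by rw [hx_def]; ring
    have e3 : x n + 1 = (δ + ↑n - ↑p + 3) / 2 := by rw [hx_def]; ring
    have hG3 : Real.Gamma ((δ + ↑n - ↑p + 3) / 2) ≠ 0 := by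
      have : (0:ℝ) < (δ + ↑n - ↑p + 3) / 2 := by
        have : (0:ℝ) ≤ n := Nat.cast_nonneg n; linarith
      exact (Real.Gamma_pos_of_pos this).ne'
    have hfront : Gamma2 ((δ + ↑n - ↑p + 2) / 2) * Real.Gamma ((δ - ↑p + 3) / 2) ^ 2 /
        (Gamma2 ((δ - ↑p + 2) / 2) * Real.Gamma ((δ + ↑n - ↑p + 3) / 2) ^ 2) =
        K * (Real.Gamma (x n + 1/2) * Real.Gamma (x n) / Real.Gamma (x n + 1) ^ 2) := by
      rw [hK_def, e1, e3]
      rw [show Gamma2 ((δ + ↑n - ↑p + 2) / 2) =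
          Real.sqrt π * Real.Gamma ((δ + ↑n - ↑p + 2) / 2) * Real.Gamma (x n) from by
        rw [Gamma2, e2]]
      field_simp
    calc BFmarg p δ r n
        = Gamma2 ((δ + ↑n - ↑p + 2) / 2) * Real.Gamma ((δ - ↑p + 3) / 2) ^ 2 /
            (Gamma2 ((δ - ↑p + 2) / 2) * Real.Gamma ((δ + ↑n - ↑p + 3) / 2) ^ 2) *
            ((1 - t n ^ 2) ^ (-(δ + ↑n - ↑p + 2) / 2)) *
            ((δ + ↑n - ↑p - 1) / (δ - ↑p - 1)) := rfl
      _ = K * (Real.Gamma (x n + 1/2) * Real.Gamma (x n) / Real.Gamma (x n + 1) ^ 2) *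
            ((1 - t n ^ 2) ^ (-(δ + ↑n - ↑p + 2) / 2)) *
            ((δ + ↑n - ↑p - 1) / (δ - ↑p - 1)) := by rw [hfront]
  have hBFpos : ∀ n : ℕ, 0 < BFmarg p δ r n := by
    intro n
    rw [hBF n]
    have hx0 : (0:ℝ) < x n := by linarith [hxn n]
    have h1 : 0 < Real.Gamma (x n + 1/2) := Real.Gamma_pos_of_pos (by linarith)
    have h2 : 0 < Real.Gamma (x n) := Real.Gamma_pos_of_pos hx0
    have h3 : 0 < Real.Gamma (x n + 1) := Real.Gamma_pos_of_pos (by linarith)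
    have h4 : 0 < (1 - t n ^ 2) ^ (-(δ + n - p + 2) / 2) :=
      Real.rpow_pos_of_pos (htpos n) _
    have h5 : (0:ℝ) < δ + ↑n - ↑p - 1 := by
      have : (0:ℝ) ≤ n := Nat.cast_nonneg n; linarith
    positivity
  -- rpow as exponential
  have hPexp : ∀ n : ℕ, (1 - t n ^ 2) ^ (-(δ + n - p + 2) / 2) =
      Real.exp ((x n + 1/2) * (-Real.log (1 - t n ^ 2))) := by
    intro n
    rw [Real.rpow_def_of_pos (htpos n)]
    congr 1
    rw [hx_def]; ring
  have hx_half : ∀ n : ℕ, x n + 1/2 = (δ - ↑p + 2 + n) / 2 := by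
    intro n; rw [hx_def]; ring
  constructor
  · -- part (a)
    intro r₀ hlim h0 h1
    -- t n → r₀
    have hden : Tendsto (fun n : ℕ => (δ - ↑p - 1 + (n:ℝ))) atTop atTop :=
      tendsto_atTop_add_const_left _ _ tendsto_natCast_atTop_atTop
    have hfrac : Tendsto (fun n : ℕ => (n:ℝ) / (δ - ↑p - 1 + n)) atTop (nhds 1) := by
      have h2' : Tendsto (fun n : ℕ => (δ - ↑p - 1) / (δ - ↑p - 1 + (n:ℝ))) atTop (nhds 0) :=
        tendsto_const_nhds.div_atTop hden
      have h3' : Tendsto (fun n : ℕ => 1 - (δ - ↑p - 1) / (δ - ↑p - 1 + (n:ℝ)))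
          atTop (nhds (1 - 0)) := tendsto_const_nhds.sub h2'
      rw [sub_zero] at h3'
      refine h3'.congr fun n => ?_
      have hne : (δ - ↑p - 1 + (n:ℝ)) ≠ 0 := by
        have : (0:ℝ) ≤ n := Nat.cast_nonneg n; positivity
      field_simp
      ring
    have htlim : Tendsto t atTop (nhds r₀) := by
      have := hlim.mul hfrac
      rw [mul_one] at this
      refine this.congr fun n => ?_
      rw [ht_def]; dsimp only; ring
    have hsq : Tendsto (fun n => 1 - t n ^ 2) atTop (nhds (1 - r₀ ^ 2)) := by
      have h2' : Tendsto (fun n => t n ^ 2) atTop (nhds (r₀ ^ 2)) := by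
        simpa [pow_two] using htlim.mul htlim
      exact tendsto_const_nhds.sub h2'
    have hr₀2 : 0 < r₀ ^ 2 := by
      have : r₀ ≠ 0 := by intro h; rw [h, abs_zero] at h0; exact lt_irrefl 0 h0
      positivity
    have hLr : 0 < 1 - r₀ ^ 2 := by nlinarith [sq_abs r₀, abs_nonneg r₀]
    have hLr1 : 1 - r₀ ^ 2 < 1 := by linarith
    set c : ℝ := -Real.log (1 - r₀ ^ 2) with hc_def
    have hc : 0 < c := by
      have := Real.log_neg hLr hLr1
      rw [hc_def]; linarith
    have hloglim : Tendsto (fun n => Real.log (1 - t n ^ 2)) atTop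
        (nhds (Real.log (1 - r₀ ^ 2))) :=
      ((Real.continuousAt_log hLr.ne').tendsto).comp hsq
    have hev1 : ∀ᶠ n in atTop, Real.log (1 - t n ^ 2) < -(c / 2) := by
      apply hloglim.eventually_lt_const
      rw [hc_def]; linarith
    -- the diverging minorant
    obtain ⟨N, hN⟩ := exists_nat_ge (δ - ↑p + 2)
    have hy : Tendsto (fun n : ℕ => c * (n:ℝ) / 4) atTop atTop := by
      apply Tendsto.atTop_div_const (by norm_num : (0:ℝ) < 4)
      exact tendsto_natCast_atTop_atTop.const_mul_atTop hc
    have h3 : Tendsto (fun n : ℕ => Real.exp (c * n / 4) / (c * n / 4) ^ 2) atTop atTop :=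
      (tendsto_exp_div_pow_atTop 2).comp hy
    have h4 : Tendsto (fun n : ℕ =>
        (K * (c/4)^2) * (Real.exp (c * n / 4) / (c * n / 4) ^ 2)) atTop atTop :=
      h3.const_mul_atTop (by positivity)
    apply tendsto_atTop_mono' atTop ?_ h4
    filter_upwards [hev1, eventually_ge_atTop (max N 1)] with n hn1 hn2
    have hnN : (δ - ↑p + 2) ≤ (n:ℝ) := by
      refine hN.trans ?_
      exact_mod_cast le_trans (le_max_left N 1) hn2
    have hn1' : 1 ≤ n := le_trans (le_max_right N 1) hn2
    have hnpos : (0:ℝ) < n := by exact_mod_cast hn1'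
    have hxle : x n + 1/2 ≤ n := by rw [hx_half]; linarith
    have hxge : (n:ℝ)/2 ≤ x n + 1/2 := by rw [hx_half]; linarith
    have hx0 : (0:ℝ) < x n := by linarith [hxn n]
    -- identify the minorant
    have heq : (K * (c/4)^2) * (Real.exp (c * n / 4) / (c * n / 4) ^ 2) =
        K * ((n:ℝ)^2)⁻¹ * Real.exp (c * n / 4) := by
      have hcne : c ≠ 0 := hc.ne'
      have hnne : (n:ℝ) ≠ 0 := hnpos.ne'
      field_simp
    rw [heq, hBF n]
    have hQ : ((n:ℝ)^2)⁻¹ ≤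
        Real.Gamma (x n + 1/2) * Real.Gamma (x n) / Real.Gamma (x n + 1) ^ 2 := by
      refine le_trans ?_ (Q_lower (hxn n))
      apply inv_anti₀ (by positivity)
      have : 0 < x n + 1/2 := by linarith
      nlinarith
    have hP : Real.exp (c * n / 4) ≤ (1 - t n ^ 2) ^ (-(δ + n - p + 2) / 2) := by
      rw [hPexp n]
      apply Real.exp_le_exp.2
      have hlogb : c/2 ≤ -Real.log (1 - t n ^ 2) := by linarith
      calc c * n / 4 = (n/2) * (c/2) := by ring
        _ ≤ (x n + 1/2) * (-Real.log (1 - t n ^ 2)) := by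
            apply mul_le_mul hxge hlogb (by linarith) (by linarith)
    have hL : (1:ℝ) ≤ (δ + n - p - 1) / (δ - p - 1) := by
      rw [le_div_iff₀ hd]
      have : (0:ℝ) ≤ n := Nat.cast_nonneg n
      linarith
    have hGpos1 : 0 < Real.Gamma (x n + 1/2) := Real.Gamma_pos_of_pos (by linarith)
    have hGpos2 : 0 < Real.Gamma (x n) := Real.Gamma_pos_of_pos hx0
    have hGpos3 : 0 < Real.Gamma (x n + 1) := Real.Gamma_pos_of_pos (by linarith)
    have hQnn : 0 ≤ Real.Gamma (x n + 1/2) * Real.Gamma (x n) / Real.Gamma (x n + 1) ^ 2 := by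
      positivity
    have hPnn : 0 ≤ (1 - t n ^ 2) ^ (-(δ + n - p + 2) / 2) :=
      (Real.rpow_pos_of_pos (htpos n) _).le
    have s1 : K * ((n:ℝ)^2)⁻¹ ≤
        K * (Real.Gamma (x n + 1/2) * Real.Gamma (x n) / Real.Gamma (x n + 1) ^ 2) :=
      mul_le_mul_of_nonneg_left hQ hKpos.le
    have s2 : K * ((n:ℝ)^2)⁻¹ * Real.exp (c * n / 4) ≤
        K * (Real.Gamma (x n + 1/2) * Real.Gamma (x n) / Real.Gamma (x n + 1) ^ 2) *
          ((1 - t n ^ 2) ^ (-(δ + n - p + 2) / 2)) :=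
      mul_le_mul s1 hP (Real.exp_pos _).le (mul_nonneg hKpos.le hQnn)
    have s3 := mul_le_mul s2 hL zero_le_one
      (mul_nonneg (mul_nonneg hKpos.le hQnn) hPnn)
    calc K * ((n:ℝ)^2)⁻¹ * Real.exp (c * n / 4)
        = K * ((n:ℝ)^2)⁻¹ * Real.exp (c * n / 4) * 1 := by ring
      _ ≤ K * (Real.Gamma (x n + 1/2) * Real.Gamma (x n) / Real.Gamma (x n + 1) ^ 2) *
            ((1 - t n ^ 2) ^ (-(δ + n - p + 2) / 2)) * ((δ + n - p - 1) / (δ - p - 1)) := s3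
  · -- part (b)
    rintro ⟨K₀, hK₀⟩
    set K₁ : ℝ := max K₀ 1 with hK₁_def
    have hK₁pos : (0:ℝ) < K₁ := lt_of_lt_of_le one_pos (le_max_right _ _)
    have hK₁ : ∀ n : ℕ, (n:ℝ) * r n ^ 2 ≤ K₁ := fun n => (hK₀ n).trans (le_max_left _ _)
    set M : ℝ := Real.exp (2 * K₁) with hM_def
    have hMpos : 0 < M := Real.exp_pos _
    set e₀ : ℝ := (δ - ↑p) / (δ - ↑p - 1) with he₀_def
    have he₀pos : 0 < e₀ := by rw [he₀_def]; apply div_pos <;> linarith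
    set C : ℝ := 4 * K * M * e₀ with hC_def
    have hCpos : 0 < C := by rw [hC_def]; positivity
    -- the vanishing majorant
    have hglim : Tendsto (fun n : ℕ => C * (Real.sqrt (n:ℝ))⁻¹) atTop (nhds 0) := by
      have h1' : Tendsto (fun y : ℝ => y ^ (-(1/2 : ℝ))) atTop (nhds 0) :=
        tendsto_rpow_neg_atTop (by norm_num)
      have h2' : Tendsto (fun n : ℕ => ((n:ℝ)) ^ (-(1/2 : ℝ))) atTop (nhds 0) :=
        h1'.comp tendsto_natCast_atTop_atTop
      have h3' := h2'.const_mul C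
      rw [mul_zero] at h3'
      refine h3'.congr fun n => ?_
      rw [Real.sqrt_eq_rpow, ← Real.rpow_neg (Nat.cast_nonneg n)]
    obtain ⟨N, hN⟩ := exists_nat_ge (max (δ - ↑p + 2) (4 * K₁))
    apply squeeze_zero' (Eventually.of_forall fun n => (hBFpos n).le) ?_ hglim
    filter_upwards [eventually_ge_atTop (max N 1)] with n hn2
    have hn1' : 1 ≤ n := le_trans (le_max_right N 1) hn2
    have hnpos : (0:ℝ) < n := by exact_mod_cast hn1'
    have hnN : (max (δ - ↑p + 2) (4 * K₁)) ≤ (n:ℝ) := by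
      refine hN.trans ?_
      exact_mod_cast le_trans (le_max_left N 1) hn2
    have hnd : δ - ↑p + 2 ≤ (n:ℝ) := le_trans (le_max_left _ _) hnN
    have hnK : 4 * K₁ ≤ (n:ℝ) := le_trans (le_max_right _ _) hnN
    have hxle : x n + 1/2 ≤ n := by rw [hx_half]; linarith
    have hxge : (n:ℝ)/2 ≤ x n := by rw [hx_def]; dsimp only; linarith
    have hx0 : (0:ℝ) < x n := by linarith [hxn n]
    -- bound on t n ^ 2
    have ht2b : t n ^ 2 ≤ K₁ / n := by
      rw [ht_def]; dsimp only
      rw [div_pow, div_le_div_iff₀ (by positivity) hnpos]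
      have h5 : ((n:ℝ) * r n) ^ 2 * n = ((n:ℝ) * r n ^ 2) * (n:ℝ)^2 := by ring
      rw [h5]
      have h6 : ((n:ℝ) * r n ^ 2) * (n:ℝ)^2 ≤ K₁ * (n:ℝ)^2 :=
        mul_le_mul_of_nonneg_right (hK₁ n) (sq_nonneg _)
      refine h6.trans ?_
      have : (n:ℝ)^2 ≤ (δ - ↑p - 1 + n)^2 := by nlinarith
      exact mul_le_mul_of_nonneg_left this hK₁pos.le
    have ht2q : t n ^ 2 ≤ 1/4 := by
      refine ht2b.trans ?_
      rw [div_le_div_iff₀ hnpos (by norm_num)]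
      linarith
    -- bound on the rpow factor
    have hPb : (1 - t n ^ 2) ^ (-(δ + n - p + 2) / 2) ≤ M := by
      rw [hPexp n, hM_def]
      apply Real.exp_le_exp.2
      have hb : (1:ℝ)/2 ≤ 1 - t n ^ 2 := by linarith
      have hlog1 : -Real.log (1 - t n ^ 2) ≤ t n ^ 2 / (1 - t n ^ 2) := by
        have h7 := Real.log_le_sub_one_of_pos (inv_pos.2 (htpos n))
        rw [Real.log_inv] at h7
        have : (1 - t n ^ 2)⁻¹ - 1 = t n ^ 2 / (1 - t n ^ 2) := by
          field_simp
          ring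
        linarith [this ▸ h7]
      have hlog2 : t n ^ 2 / (1 - t n ^ 2) ≤ 2 * (K₁ / n) := by
        rw [div_le_iff₀ (htpos n)]
        have h8 : t n ^ 2 ≤ K₁ / n := ht2b
        have h9 : 0 ≤ K₁ / (n:ℝ) := by positivity
        nlinarith
      have hlognn : 0 ≤ -Real.log (1 - t n ^ 2) := by
        have hle1 : 1 - t n ^ 2 ≤ 1 := by nlinarith [sq_nonneg (t n)]
        have h0le : (0:ℝ) ≤ 1 - t n ^ 2 := (htpos n).le
        have := Real.log_nonpos h0le hle1
        linarith
      calc (x n + 1/2) * (-Real.log (1 - t n ^ 2))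
          ≤ (n:ℝ) * (2 * (K₁ / n)) := by
            apply mul_le_mul hxle (hlog1.trans hlog2) hlognn hnpos.le
        _ = 2 * K₁ := by field_simp
    -- bound on the Gamma ratio
    have hQb : Real.Gamma (x n + 1/2) * Real.Gamma (x n) / Real.Gamma (x n + 1) ^ 2
        ≤ Real.sqrt (n:ℝ) / ((n:ℝ)/2) ^ 2 := by
      refine (Q_upper hx0).trans ?_
      apply div_le_div₀ (Real.sqrt_nonneg _)
        (Real.sqrt_le_sqrt (by linarith)) (by positivity) (by nlinarith)
    -- bound on the linear factor
    have hLb : (δ + n - p - 1) / (δ - p - 1) ≤ (n:ℝ) * e₀ := by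
      rw [he₀_def, div_le_iff₀ hd]
      have h10 : (n:ℝ) * ((δ - ↑p) / (δ - ↑p - 1)) * (δ - ↑p - 1) = (n:ℝ) * (δ - ↑p) := by
        field_simp
      rw [h10]
      nlinarith
    -- put it together
    rw [hBF n]
    have hspos : 0 < Real.sqrt (n:ℝ) := Real.sqrt_pos.2 hnpos
    have hmulself : Real.sqrt (n:ℝ) * Real.sqrt (n:ℝ) = (n:ℝ) :=
      Real.mul_self_sqrt hnpos.le
    have hinv : (Real.sqrt (n:ℝ))⁻¹ = Real.sqrt (n:ℝ) / (n:ℝ) := by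
      rw [eq_div_iff hnpos.ne']
      nth_rewrite 2 [← hmulself]
      rw [inv_mul_cancel_left₀ hspos.ne']
    have key : K * (Real.sqrt (n:ℝ) / ((n:ℝ)/2) ^ 2) * M * ((n:ℝ) * e₀)
        = C * (Real.sqrt (n:ℝ))⁻¹ := by
      rw [hC_def, hinv]
      field_simp
      ring
    rw [← key]
    have hQnn : 0 ≤ Real.Gamma (x n + 1/2) * Real.Gamma (x n) / Real.Gamma (x n + 1) ^ 2 := by
      have h1 : 0 < Real.Gamma (x n + 1/2) := Real.Gamma_pos_of_pos (by linarith)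
      have h2 : 0 < Real.Gamma (x n) := Real.Gamma_pos_of_pos hx0
      have h3 : 0 < Real.Gamma (x n + 1) := Real.Gamma_pos_of_pos (by linarith)
      positivity
    have hPnn : 0 ≤ (1 - t n ^ 2) ^ (-(δ + n - p + 2) / 2) :=
      (Real.rpow_pos_of_pos (htpos n) _).le
    have hLnn : 0 ≤ (δ + n - p - 1) / (δ - p - 1) := by
      have hn0 : (0:ℝ) ≤ n := Nat.cast_nonneg n
      exact div_nonneg (by linarith) hd.le
    have hQb'nn : (0:ℝ) ≤ Real.sqrt (n:ℝ) / ((n:ℝ)/2) ^ 2 := by positivity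
    have s1 : K * (Real.Gamma (x n + 1/2) * Real.Gamma (x n) / Real.Gamma (x n + 1) ^ 2) ≤
        K * (Real.sqrt (n:ℝ) / ((n:ℝ)/2) ^ 2) :=
      mul_le_mul_of_nonneg_left hQb hKpos.le
    have s2 : K * (Real.Gamma (x n + 1/2) * Real.Gamma (x n) / Real.Gamma (x n + 1) ^ 2) *
          ((1 - t n ^ 2) ^ (-(δ + n - p + 2) / 2)) ≤
        K * (Real.sqrt (n:ℝ) / ((n:ℝ)/2) ^ 2) * M :=
      mul_le_mul s1 hPb hPnn (mul_nonneg hKpos.le hQb'nn)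
    exact mul_le_mul s2 hLb hLnn
      (mul_nonneg (mul_nonneg hKpos.le hQb'nn) hMpos.le)
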